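/- Let fε : ℝ → ℝ be defined by fε(x) = f(x, x/ε) where f : ℝ × ℝ → ℝ is continuous and periodic with period 1 in its second argument. Then for every interval [a,b], the average (1/(b−a))∫ₐᵇ fε(x) dx converges as ε → 0 to (1/(b−a))∫ₐᵇ (∫₀¹ f(x,y) dy) dx. -/

import Mathlib

open Set intervalIntegral Filter

/-- Oscillation lemma: for a continuous 1-periodic function `g`,
`∫ t in c..d, g (t/ε)` tends to `(d - c) * ∫₀¹ g` as `ε → 0⁺`. -/
lemma osc_tendsto (g : ℝ → ℝ) (hg : Continuous g) (hp : Function.Periodic g 1)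
    (c d : ℝ) :
    Tendsto (fun ε : ℝ => ∫ t in c..d, g (t / ε)) (nhdsWithin 0 (Ioi 0))
      (nhds ((d - c) * ∫ y in (0:ℝ)..1, g y)) := by
  set M : ℝ := ∫ y in (0:ℝ)..1, g y with hM
  set G : ℝ → ℝ := fun t => (∫ u in (0:ℝ)..t, g u) - t * M with hG
  have hGcont : Continuous G :=
    (intervalIntegral.continuous_primitive (fun a b => hg.intervalIntegrable a b) 0).sub
      (continuous_id.mul continuous_const)
  have hGper : Function.Periodic G 1 := by
    intro t
    have h1 : (∫ u in (0:ℝ)..(t + 1), g u) - (∫ u in (0:ℝ)..t, g u)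
        = ∫ u in t..(t + 1), g u :=
      intervalIntegral.integral_interval_sub_left (hg.intervalIntegrable _ _)
        (hg.intervalIntegrable _ _)
    have h2 : (∫ u in t..(t + 1), g u) = M := by
      simpa using hp.intervalIntegral_add_eq t 0
    simp only [hG]
    nlinarith [h1, h2]
  obtain ⟨K, hK⟩ : ∃ K, ∀ t, |G t| ≤ K := by
    obtain ⟨K, hK⟩ :=
      (isCompact_Icc : IsCompact (Icc (0:ℝ) 1)).exists_bound_of_continuousOn
        hGcont.continuousOn
    refine ⟨K, fun t => ?_⟩
    have h1 : G (Int.fract t) = G t := by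
      have := hGper.sub_int_mul_eq (x := t) (⌊t⌋); rw [mul_one] at this; exact this
    have h2 : Int.fract t ∈ Icc (0:ℝ) 1 :=
      ⟨Int.fract_nonneg t, (Int.fract_lt_one t).le⟩
    have := hK _ h2
    rwa [Real.norm_eq_abs, h1] at this
  have key : ∀ ε : ℝ, ε ∈ Ioi (0:ℝ) →
      (∫ t in c..d, g (t / ε)) = ε * (G (d / ε) - G (c / ε)) + (d - c) * M := by
    intro ε hε
    have hε' : ε ≠ 0 := ne_of_gt hε
    rw [intervalIntegral.integral_comp_div g hε', smul_eq_mul]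
    have h1 : (∫ u in c / ε..d / ε, g u)
        = (∫ u in (0:ℝ)..(d / ε), g u) - ∫ u in (0:ℝ)..(c / ε), g u :=
      (intervalIntegral.integral_interval_sub_left (hg.intervalIntegrable _ _)
        (hg.intervalIntegrable _ _)).symm
    rw [h1]
    simp only [hG]
    field_simp
    ring
  have h0 : Tendsto (fun ε : ℝ => ε * (G (d / ε) - G (c / ε)))
      (nhdsWithin 0 (Ioi 0)) (nhds 0) := by
    refine squeeze_zero_norm (a := fun ε : ℝ => |ε| * (2 * K)) (fun ε => ?_) ?_
    · 
      rw [Real.norm_eq_abs, abs_mul]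
      have : |G (d / ε) - G (c / ε)| ≤ 2 * K := by
        calc |G (d / ε) - G (c / ε)| ≤ |G (d / ε)| + |G (c / ε)| := abs_sub _ _
          _ ≤ K + K := add_le_add (hK _) (hK _)
          _ = 2 * K := by ring
      exact mul_le_mul_of_nonneg_left this (abs_nonneg _)
    · have : Tendsto (fun ε : ℝ => |ε| * (2 * K)) (nhds 0) (nhds (|0| * (2 * K))) :=
        (continuous_abs.mul continuous_const).tendsto 0
      simpa using this.mono_left nhdsWithin_le_nhds
  have hfinal : Tendsto (fun ε : ℝ => ε * (G (d / ε) - G (c / ε)) + (d - c) * M)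
      (nhdsWithin 0 (Ioi 0)) (nhds ((d - c) * M)) := by
    simpa using h0.add (tendsto_const_nhds (x := (d - c) * M))
  exact hfinal.congr' (eventuallyEq_of_mem self_mem_nhdsWithin
    (fun ε hε => (key ε hε).symm))

/-- Basic averaging lemma of periodic homogenization: for f continuous and
1-periodic in its second argument, the averages of x ↦ f(x, x/ε) over [a,b]
converge, as ε → 0⁺, to the average of the cell average. -/
theorem periodic_averaging (f : ℝ → ℝ → ℝ)
    (hf : Continuous fun p : ℝ × ℝ => f p.1 p.2)
    (hper : ∀ x y : ℝ, f x (y + 1) = f x y)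
    (a b : ℝ) (hab : a < b) :
    Tendsto (fun ε : ℝ => (b - a)⁻¹ * ∫ x in a..b, f x (x / ε))
      (nhdsWithin 0 (Ioi 0))
      (nhds ((b - a)⁻¹ * ∫ x in a..b, ∫ y in (0:ℝ)..1, f x y)) := by
  have hb : (0:ℝ) < b - a := sub_pos.2 hab
  set F : ℝ → ℝ := fun x => ∫ y in (0:ℝ)..1, f x y with hF
  have hFcont : Continuous F :=
    intervalIntegral.continuous_parametric_intervalIntegral_of_continuous' hf 0 1
  clear_value F
  -- continuity of slices
  have hslice : ∀ c : ℝ, Continuous (fun y => f c y) :=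
    fun c => hf.comp (continuous_const.prodMk continuous_id)
  have hdiag : ∀ ε : ℝ, Continuous (fun t => f t (t / ε)) :=
    fun ε => hf.comp (continuous_id.prodMk (continuous_id.div_const ε))
  have hdiag2 : ∀ c ε : ℝ, Continuous (fun t : ℝ => f c (t / ε)) :=
    fun c ε => hf.comp (continuous_const.prodMk (continuous_id.div_const ε))
  -- reduce f x y to y ∈ [0,1] by periodicity
  have hfr : ∀ x y : ℝ, f x (Int.fract y) = f x y := by
    intro x y
    have hp : Function.Periodic (f x) 1 := fun t => hper x t
    have := hp.sub_int_mul_eq (x := y) (⌊y⌋); rw [mul_one] at this; exact this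
  suffices key : Tendsto (fun ε : ℝ => ∫ x in a..b, f x (x / ε))
      (nhdsWithin 0 (Ioi 0)) (nhds (∫ x in a..b, F x)) by
    exact key.const_mul _
  rw [Metric.tendsto_nhds]
  intro η hη
  set η₀ : ℝ := η / (3 * (b - a)) with hη₀def
  have hη₀ : 0 < η₀ := by positivity
  have hη₀ba : η₀ * (b - a) = η / 3 := by
    rw [hη₀def]; field_simp
  clear_value η₀
  -- uniform continuity on a compact rectangle
  have hKcpt : IsCompact (Icc a b ×ˢ Icc (0:ℝ) 1) := isCompact_Icc.prod isCompact_Icc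
  have huc := hKcpt.uniformContinuousOn_of_continuous hf.continuousOn
  rw [Metric.uniformContinuousOn_iff] at huc
  obtain ⟨δ, hδ, hδ'⟩ := huc η₀ hη₀
  have hstep : ∀ x ∈ Icc a b, ∀ x' ∈ Icc a b, |x - x'| < δ →
      ∀ y : ℝ, |f x y - f x' y| ≤ η₀ := by
    intro x hx x' hx' hxx' y
    rw [← hfr x y, ← hfr x' y]
    have hy : Int.fract y ∈ Icc (0:ℝ) 1 :=
      ⟨Int.fract_nonneg y, (Int.fract_lt_one y).le⟩
    have hd : dist ((x, Int.fract y) : ℝ × ℝ) (x', Int.fract y) < δ := by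
      rw [Prod.dist_eq, dist_self]
      exact max_lt (by rwa [Real.dist_eq]) hδ
    have := hδ' (x, Int.fract y) ⟨hx, hy⟩ (x', Int.fract y) ⟨hx', hy⟩ hd
    rw [Real.dist_eq] at this
    exact this.le
  -- choice of partition
  obtain ⟨n, hn⟩ := exists_nat_gt ((b - a) / δ)
  have hn0 : 0 < (n:ℝ) := lt_trans (div_pos hb hδ) hn
  have hmesh : (b - a) / n < δ := by
    rw [div_lt_iff₀ hn0]
    have := (div_lt_iff₀ hδ).1 hn
    linarith
  set X : ℕ → ℝ := fun i => a + i * ((b - a) / n) with hX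
  have hX0 : X 0 = a := by simp [hX]
  have hXn : X n = b := by
    have hn' : (n:ℝ) ≠ 0 := hn0.ne'
    simp only [hX]; field_simp; ring
  have hXsucc : ∀ i : ℕ, X (i + 1) - X i = (b - a) / n := by
    intro i; simp only [hX]; push_cast; ring
  have hmesh0 : 0 ≤ (b - a) / n := le_of_lt (div_pos hb hn0)
  have hXmem : ∀ i : ℕ, i ≤ n → X i ∈ Icc a b := by
    intro i hi
    have hi' : (i:ℝ) ≤ n := Nat.cast_le.2 hi
    have h1 : 0 ≤ (i:ℝ) * ((b - a) / n) := mul_nonneg (Nat.cast_nonneg i) hmesh0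
    have h2 : (i:ℝ) * ((b - a) / n) ≤ (n:ℝ) * ((b - a) / n) :=
      mul_le_mul_of_nonneg_right hi' hmesh0
    have h3 : (n:ℝ) * ((b - a) / n) = b - a := by field_simp
    rw [hX]
    constructor
    · linarith
    · linarith
  have hXle : ∀ i : ℕ, X i ≤ X (i + 1) := by
    intro i
    exact sub_nonneg.1 (by rw [hXsucc i]; exact hmesh0)
  clear_value X
  -- pointwise closeness on each cell
  have hcell : ∀ i : ℕ, i < n → ∀ t ∈ Icc (X i) (X (i + 1)), ∀ y : ℝ,
      |f t y - f (X i) y| ≤ η₀ := by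
    intro i hi t ht y
    have hXi := hXmem i hi.le
    have hXi1 := hXmem (i + 1) hi
    have htab : t ∈ Icc a b := ⟨le_trans hXi.1 ht.1, le_trans ht.2 hXi1.2⟩
    have hdist : |t - X i| < δ := by
      rw [abs_of_nonneg (by linarith [ht.1])]
      have := hXsucc i
      have := ht.2
      linarith
    exact hstep t htab (X i) hXi hdist y
  set S : ℝ → ℝ := fun ε => ∑ i ∈ Finset.range n,
    ∫ t in X i..X (i + 1), f (X i) (t / ε) with hS
  set T : ℝ := ∑ i ∈ Finset.range n, (X (i + 1) - X i) * ∫ y in (0:ℝ)..1, f (X i) y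
    with hT
  clear_value S T
  have hST : Tendsto S (nhdsWithin 0 (Ioi 0)) (nhds T) := by
    rw [hS, hT]
    apply tendsto_finset_sum
    intro i _
    exact osc_tendsto (fun y => f (X i) y) (hslice (X i)) (fun t => hper (X i) t)
      (X i) (X (i + 1))
  -- |I ε - S ε| ≤ η₀ (b - a)
  have hIS : ∀ ε : ℝ, |(∫ x in a..b, f x (x / ε)) - S ε| ≤ η₀ * (b - a) := by
    intro ε
    have hsplit : (∫ x in a..b, f x (x / ε))
        = ∑ i ∈ Finset.range n, ∫ t in X i..X (i + 1), f t (t / ε) := by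
      rw [intervalIntegral.sum_integral_adjacent_intervals
        (fun k _ => (hdiag ε).intervalIntegrable _ _), hX0, hXn]
    rw [hsplit, hS, ← Finset.sum_sub_distrib]
    calc |∑ i ∈ Finset.range n, ((∫ t in X i..X (i + 1), f t (t / ε))
          - ∫ t in X i..X (i + 1), f (X i) (t / ε))|
        ≤ ∑ i ∈ Finset.range n, |(∫ t in X i..X (i + 1), f t (t / ε))
          - ∫ t in X i..X (i + 1), f (X i) (t / ε)| := Finset.abs_sum_le_sum_abs _ _
      _ ≤ ∑ i ∈ Finset.range n, η₀ * ((b - a) / n) := by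
          apply Finset.sum_le_sum
          intro i hi
          rw [← intervalIntegral.integral_sub ((hdiag ε).intervalIntegrable _ _)
            ((hdiag2 (X i) ε).intervalIntegrable _ _)]
          have hb1 : ∀ t ∈ Set.uIoc (X i) (X (i + 1)),
              ‖f t (t / ε) - f (X i) (t / ε)‖ ≤ η₀ := by
            intro t ht
            rw [uIoc_of_le (hXle i)] at ht
            exact hcell i (Finset.mem_range.1 hi) t (Ioc_subset_Icc_self ht) _
          have := intervalIntegral.norm_integral_le_of_norm_le_const hb1
          rw [Real.norm_eq_abs] at this
          refine this.trans ?_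
          rw [abs_of_nonneg (by linarith [hXsucc i, hmesh0] : (0:ℝ) ≤ X (i+1) - X i),
            hXsucc i]
      _ = η₀ * (b - a) := by
          rw [Finset.sum_const, Finset.card_range, nsmul_eq_mul]
          field_simp
  -- |T - ∫ F| ≤ η₀ (b - a)
  have hTL : |T - ∫ x in a..b, F x| ≤ η₀ * (b - a) := by
    have hsplitF : (∫ x in a..b, F x)
        = ∑ i ∈ Finset.range n, ∫ t in X i..X (i + 1), F t := by
      rw [intervalIntegral.sum_integral_adjacent_intervals
        (fun k _ => hFcont.intervalIntegrable _ _), hX0, hXn]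
    have hTterm : ∀ i : ℕ, (X (i + 1) - X i) * (∫ y in (0:ℝ)..1, f (X i) y)
        = ∫ t in X i..X (i + 1), F (X i) := by
      intro i
      rw [intervalIntegral.integral_const, smul_eq_mul]
      simp only [hF]
    rw [hsplitF, hT]
    have : (∑ i ∈ Finset.range n, (X (i + 1) - X i) * ∫ y in (0:ℝ)..1, f (X i) y)
        = ∑ i ∈ Finset.range n, ∫ t in X i..X (i + 1), F (X i) := by
      exact Finset.sum_congr rfl fun i _ => hTterm i
    rw [this, ← Finset.sum_sub_distrib]
    calc |∑ i ∈ Finset.range n, ((∫ t in X i..X (i + 1), F (X i))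
          - ∫ t in X i..X (i + 1), F t)|
        ≤ ∑ i ∈ Finset.range n, |(∫ t in X i..X (i + 1), F (X i))
          - ∫ t in X i..X (i + 1), F t| := Finset.abs_sum_le_sum_abs _ _
      _ ≤ ∑ i ∈ Finset.range n, η₀ * ((b - a) / n) := by
          apply Finset.sum_le_sum
          intro i hi
          rw [← intervalIntegral.integral_sub (intervalIntegrable_const)
            (hFcont.intervalIntegrable _ _)]
          have hb1 : ∀ t ∈ Set.uIoc (X i) (X (i + 1)), ‖F (X i) - F t‖ ≤ η₀ := by
            intro t ht
            rw [uIoc_of_le (hXle i)] at ht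
            have ht' := Ioc_subset_Icc_self ht
            have hFdiff : F (X i) - F t = ∫ y in (0:ℝ)..1, (f (X i) y - f t y) := by
              simp only [hF]
              exact (intervalIntegral.integral_sub ((hslice _).intervalIntegrable _ _)
                ((hslice _).intervalIntegrable _ _)).symm
            rw [Real.norm_eq_abs, hFdiff]
            have hb2 : ∀ y ∈ Set.uIoc (0:ℝ) 1, ‖f (X i) y - f t y‖ ≤ η₀ := by
              intro y _
              rw [Real.norm_eq_abs, abs_sub_comm]
              exact hcell i (Finset.mem_range.1 hi) t ht' y
            have := intervalIntegral.norm_integral_le_of_norm_le_const hb2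
            rw [Real.norm_eq_abs] at this
            simpa using this
          have := intervalIntegral.norm_integral_le_of_norm_le_const hb1
          rw [Real.norm_eq_abs] at this
          refine this.trans ?_
          rw [abs_of_nonneg (by linarith [hXsucc i, hmesh0] : (0:ℝ) ≤ X (i+1) - X i),
            hXsucc i]
      _ = η₀ * (b - a) := by
          rw [Finset.sum_const, Finset.card_range, nsmul_eq_mul]
          field_simp
  -- conclusion
  have hev : ∀ᶠ ε in nhdsWithin (0:ℝ) (Ioi 0), |S ε - T| < η / 3 := by
    have := Metric.tendsto_nhds.mp hST (η / 3) (by positivity)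
    simpa [Real.dist_eq] using this
  filter_upwards [hev] with ε hε
  rw [Real.dist_eq]
  have h1 := hIS ε
  calc |(∫ x in a..b, f x (x / ε)) - ∫ x in a..b, F x|
      ≤ |(∫ x in a..b, f x (x / ε)) - S ε| + |S ε - T| + |T - ∫ x in a..b, F x| := by
        have := abs_sub_le ((∫ x in a..b, f x (x / ε))) (S ε) (∫ x in a..b, F x)
        have := abs_sub_le (S ε) T (∫ x in a..b, F x)
        linarith [abs_sub_le ((∫ x in a..b, f x (x / ε))) (S ε) (∫ x in a..b, F x),
          abs_sub_le (S ε) T (∫ x in a..b, F x)]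
    _ < η := by
        rw [hη₀ba] at h1 hTL
        linarith
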